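/- arXiv:2311.00582 — 8 statements merged into one kernel-verified Lean document; each statement's English description precedes it below -/
import Mathlib

section
/- If (p,q) is the unique Nash equilibrium of a finite two-player zero-sum matrix game R with value v*, then for every pure strategy i outside the support of p, e_iᵀ R q < v*, and for every pure strategy j outside the support of q, pᵀ R e_j > v*. -/
open Finset

/-- A mixed strategy: nonnegative entries summing to 1. -/
def isSimplex {n : ℕ} (p : Fin n → ℝ) : Prop := (∀ i, 0 ≤ p i) ∧ ∑ i, p i = 1

/-- Expected payoff `pᵀ R q` to player 1. -/
noncomputable def pay {m n : ℕ} (R : Matrix (Fin m) (Fin n) ℝ) (p : Fin m → ℝ)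
    (q : Fin n → ℝ) : ℝ :=
  ∑ i, ∑ j, p i * R i j * q j

/-- Payoff of pure row `i` against mixed column strategy `q`:  `e_iᵀ R q`. -/
noncomputable def rowPay {m n : ℕ} (R : Matrix (Fin m) (Fin n) ℝ) (i : Fin m)
    (q : Fin n → ℝ) : ℝ :=
  ∑ j, R i j * q j

/-- Payoff of mixed row strategy `p` against pure column `j`:  `pᵀ R e_j`. -/
noncomputable def colPay {m n : ℕ} (R : Matrix (Fin m) (Fin n) ℝ) (p : Fin m → ℝ)
    (j : Fin n) : ℝ :=
  ∑ i, p i * R i j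

/-- Nash equilibrium of the zero-sum matrix game `R`. -/
def isNash {m n : ℕ} (R : Matrix (Fin m) (Fin n) ℝ) (p : Fin m → ℝ)
    (q : Fin n → ℝ) : Prop :=
  isSimplex p ∧ isSimplex q ∧
    (∀ p', isSimplex p' → pay R p' q ≤ pay R p q) ∧
    (∀ q', isSimplex q' → pay R p q ≤ pay R p q')



open scoped RealInnerProductSpace

section Cone

variable {d : ℕ} {ι : Type*} [Fintype ι] [DecidableEq ι]
set_option linter.unusedSectionVars false

private lemma carath (v : ι → EuclideanSpace ℝ (Fin d)) :
    ∀ (M : ℕ) (S : Finset ι), S.card ≤ M → ∀ c : ι → ℝ, (∀ k, 0 ≤ c k) →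
    ∃ T : Finset ι, (LinearIndependent ℝ (fun k : T => v k)) ∧
      ∃ e : ι → ℝ, (∀ k, 0 ≤ e k) ∧ ∑ k ∈ S, c k • v k = ∑ k ∈ T, e k • v k := by
  intro M
  induction M with
  | zero =>
    intro S hS c hc
    have hSe : S = ∅ := Finset.card_eq_zero.mp (Nat.le_antisymm hS (Nat.zero_le _))
    subst hSe
    refine ⟨∅, ?_, c, hc, rfl⟩
    exact linearIndependent_empty_type
  | succ M ih =>
    intro S hS c hc
    by_cases hind : LinearIndependent ℝ (fun k : S => v k)
    · exact ⟨S, hind, c, hc, rfl⟩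
    obtain ⟨g, hgsum, k₁, hk₁⟩ := Fintype.not_linearIndependent_iff.mp hind
    -- extend g to ι, with a positive entry (after possible negation)
    have hG : ∃ G : ι → ℝ, (∑ k ∈ S, G k • v k = 0) ∧ (∀ k, k ∉ S → G k = 0) ∧
        ∃ k₀ ∈ S, 0 < G k₀ := by
      set g' : ι → ℝ := fun k => if h : k ∈ S then g ⟨k, h⟩ else 0 with hg'
      have hsum' : ∑ k ∈ S, g' k • v k = 0 := by
        rw [← Finset.sum_attach S (fun k => g' k • v k)]
        calc ∑ k ∈ S.attach, g' ↑k • v ↑k = ∑ k ∈ S.attach, g k • v ↑k := by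
              refine Finset.sum_congr rfl fun k _ => ?_
              simp [hg', k.2]
          _ = 0 := hgsum
      have hg'k₁ : g' ↑k₁ = g k₁ := by simp [hg', k₁.2]
      rcases lt_or_ge 0 (g' ↑k₁) with h | h
      · exact ⟨g', hsum', fun k hk => by simp [hg', hk], k₁, k₁.2, h⟩
      · refine ⟨-g', by simpa [neg_smul] using congrArg Neg.neg hsum', fun k hk => by simp [hg', hk], k₁, k₁.2, ?_⟩
        have : g' ↑k₁ ≠ 0 := by rw [hg'k₁]; exact hk₁
        have : g' ↑k₁ < 0 := lt_of_le_of_ne h this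
        simpa using this
    obtain ⟨G, hGsum, hGout, k₀, hk₀S, hk₀pos⟩ := hG
    set T₀ : Finset ι := S.filter (fun k => 0 < G k) with hT₀
    have hT₀ne : T₀.Nonempty := ⟨k₀, by simp [hT₀, hk₀S, hk₀pos]⟩
    obtain ⟨ks, hksT₀, hksmin⟩ := Finset.exists_min_image T₀ (fun k => c k / G k) hT₀ne
    have hksS : ks ∈ S := (Finset.mem_filter.mp hksT₀).1
    have hksG : 0 < G ks := (Finset.mem_filter.mp hksT₀).2
    set lam : ℝ := c ks / G ks with hlam
    have hlam0 : 0 ≤ lam := div_nonneg (hc ks) hksG.le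
    set e : ι → ℝ := fun k => c k - lam * G k with he
    have he0 : ∀ k, 0 ≤ e k := by
      intro k
      by_cases hk : 0 < G k
      · have hkS : k ∈ S := by
          by_contra hns
          rw [hGout k hns] at hk; exact lt_irrefl 0 hk
        have : lam ≤ c k / G k := hksmin k (Finset.mem_filter.mpr ⟨hkS, hk⟩)
        have := (le_div_iff₀ hk).mp this
        simpa [he, sub_nonneg] using this
      · push_neg at hk
        have : lam * G k ≤ 0 := mul_nonpos_of_nonneg_of_nonpos hlam0 hk
        have := sub_nonneg.mpr this
        simp only [he, sub_zero] at *
        nlinarith [hc k]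
    have heks : e ks = 0 := by
      simp [he, hlam, div_mul_cancel₀ (c ks) (ne_of_gt hksG)]
    have hsumeq : ∑ k ∈ S, c k • v k = ∑ k ∈ S.erase ks, e k • v k := by
      have h1 : ∑ k ∈ S, e k • v k
          = ∑ k ∈ S, c k • v k - lam • ∑ k ∈ S, G k • v k := by
        rw [Finset.smul_sum, ← Finset.sum_sub_distrib]
        refine Finset.sum_congr rfl fun k _ => ?_
        simp [he, sub_smul, smul_smul]
      rw [hGsum, smul_zero, sub_zero] at h1
      rw [← h1]
      rw [← Finset.add_sum_erase S _ hksS, heks, zero_smul, zero_add]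
    have hcard : (S.erase ks).card ≤ M := by
      rw [Finset.card_erase_of_mem hksS]
      omega
    obtain ⟨T, hT, e', he', heq⟩ := ih (S.erase ks) hcard e he0
    exact ⟨T, hT, e', he', by rw [hsumeq, heq]⟩

private lemma isClosed_coneOn (v : ι → EuclideanSpace ℝ (Fin d)) (S : Finset ι)
    (hind : LinearIndependent ℝ (fun k : S => v k)) :
    IsClosed {x : EuclideanSpace ℝ (Fin d) | ∃ e : ι → ℝ, (∀ k, 0 ≤ e k) ∧ x = ∑ k ∈ S, e k • v k} := by
  classical
  let L : (↥S → ℝ) →ₗ[ℝ] EuclideanSpace ℝ (Fin d) :=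
    { toFun := fun f => ∑ k : ↥S, f k • v ↑k
      map_add' := by intro f g; simp [add_smul, Finset.sum_add_distrib]
      map_smul' := by intro a f; simp [smul_smul, Finset.smul_sum] }
  have hker : LinearMap.ker L = ⊥ := by
    rw [LinearMap.ker_eq_bot']
    intro f hf
    have := Fintype.linearIndependent_iff.mp hind f hf
    funext k; exact this k
  have hclosed : IsClosed {f : ↥S → ℝ | ∀ k, 0 ≤ f k} := by
    have : {f : ↥S → ℝ | ∀ k, 0 ≤ f k} = ⋂ k, {f | 0 ≤ f k} := by
      ext f; simp
    rw [this]
    exact isClosed_iInter fun k => isClosed_le continuous_const (continuous_apply k)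
  have himg : {x : EuclideanSpace ℝ (Fin d) | ∃ e : ι → ℝ, (∀ k, 0 ≤ e k) ∧ x = ∑ k ∈ S, e k • v k}
      = L '' {f : ↥S → ℝ | ∀ k, 0 ≤ f k} := by
    ext x
    simp only [Set.mem_image, Set.mem_setOf_eq]
    constructor
    · rintro ⟨e, he, rfl⟩
      refine ⟨fun k => e ↑k, fun k => he ↑k, ?_⟩
      show ∑ k : ↥S, e ↑k • v ↑k = _
      rw [← Finset.sum_attach S (fun k => e k • v k)]
      rfl
    · rintro ⟨f, hf, rfl⟩
      refine ⟨fun k => if h : k ∈ S then f ⟨k, h⟩ else 0, fun k => ?_, ?_⟩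
      · by_cases h : k ∈ S <;> simp [h, hf _]
      · show (_ : EuclideanSpace ℝ (Fin d)) = _
        rw [← Finset.sum_attach S (fun k => (if h : k ∈ S then f ⟨k, h⟩ else 0) • v k)]
        show ∑ k : ↥S, f k • v ↑k = _
        refine Finset.sum_congr rfl fun k _ => ?_
        simp [k.2]
  rw [himg]
  exact ((LinearMap.isClosedEmbedding_of_injective hker).isClosedMap) _ hclosed

private lemma isClosed_coneOf (v : ι → EuclideanSpace ℝ (Fin d)) :
    IsClosed {x : EuclideanSpace ℝ (Fin d) | ∃ c : ι → ℝ, (∀ k, 0 ≤ c k) ∧ x = ∑ k, c k • v k} := by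
  classical
  have heq : {x : EuclideanSpace ℝ (Fin d) | ∃ c : ι → ℝ, (∀ k, 0 ≤ c k) ∧ x = ∑ k, c k • v k}
      = ⋃ (S : Finset ι) (_ : LinearIndependent ℝ (fun k : S => v k)),
        {x | ∃ e : ι → ℝ, (∀ k, 0 ≤ e k) ∧ x = ∑ k ∈ S, e k • v k} := by
    ext x
    simp only [Set.mem_iUnion, Set.mem_setOf_eq]
    constructor
    · rintro ⟨c, hc, rfl⟩
      obtain ⟨T, hT, e, he, heq⟩ := carath v (Finset.univ : Finset ι).card Finset.univ le_rfl c hc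
      exact ⟨T, hT, e, he, heq⟩
    · rintro ⟨S, hS, e, he, rfl⟩
      refine ⟨fun k => if k ∈ S then e k else 0, fun k => ?_, ?_⟩
      · by_cases h : k ∈ S <;> simp [h, he k]
      · have hc : ∀ k ∈ Finset.univ, (if k ∈ S then e k else 0) • v k = if k ∈ S then e k • v k else 0 := by
          intro k _; split <;> simp
        rw [Finset.sum_congr rfl hc, Finset.sum_ite_mem, Finset.univ_inter]
  rw [heq]
  exact isClosed_iUnion_of_finite fun S => isClosed_iUnion_of_finite fun hS => isClosed_coneOn v S hS

end Cone



private lemma farkas {m n : ℕ} (A : Matrix (Fin m) (Fin n) ℝ) (c : Fin n → ℝ) :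
    (∃ y : Fin m → ℝ, (∀ k, 0 ≤ y k) ∧ ∀ j, c j ≤ ∑ k, y k * A k j) ∨
    (∃ x : Fin n → ℝ, (∀ j, 0 ≤ x j) ∧ (∀ k, ∑ j, A k j * x j ≤ 0) ∧ 0 < ∑ j, c j * x j) := by
  classical
  set E := EuclideanSpace ℝ (Fin n)
  set v : (Fin m ⊕ Fin n) → E :=
    Sum.elim (fun k => (WithLp.toLp 2 (A k) : E)) (fun j => -(EuclideanSpace.single j 1)) with hv
  set Kset : Set E := {x | ∃ cf : (Fin m ⊕ Fin n) → ℝ, (∀ k, 0 ≤ cf k) ∧ x = ∑ k, cf k • v k}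
    with hKset
  -- K is a convex cone
  let K : ConvexCone ℝ E :=
    { carrier := Kset
      smul_mem' := by
        rintro t ht x ⟨cf, hcf, rfl⟩
        exact ⟨fun k => t * cf k, fun k => mul_nonneg ht.le (hcf k), by
          rw [Finset.smul_sum]; exact Finset.sum_congr rfl fun k _ => smul_smul t (cf k) (v k)⟩
      add_mem' := by
        rintro x ⟨cf, hcf, rfl⟩ y ⟨df, hdf, rfl⟩
        exact ⟨fun k => cf k + df k, fun k => add_nonneg (hcf k) (hdf k), by
          rw [← Finset.sum_add_distrib]; exact Finset.sum_congr rfl fun k _ => (add_smul _ _ _).symm⟩ }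
  have hKne : (K : Set E).Nonempty := ⟨0, ⟨fun _ => 0, fun _ => le_rfl, by simp⟩⟩
  have hKcl : IsClosed (K : Set E) := isClosed_coneOf v
  by_cases hc : (WithLp.toLp 2 c : E) ∈ K
  · left
    obtain ⟨cf, hcf, hsum⟩ := hc
    refine ⟨fun k => cf (Sum.inl k), fun k => hcf _, fun j => ?_⟩
    have happ : (WithLp.toLp 2 c : E) j = (∑ k, cf k • v k) j := by rw [← hsum]
    rw [WithLp.ofLp_sum, Finset.sum_apply j Finset.univ (fun k => cf k • v k)] at happ
    simp only [Fintype.sum_sum_type] at happ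
    have h1 : ∀ k : Fin m, (cf (Sum.inl k) • v (Sum.inl k)) j = cf (Sum.inl k) * A k j := fun k => rfl
    have h2 : ∀ j' : Fin n, (cf (Sum.inr j') • v (Sum.inr j')) j
        = cf (Sum.inr j') * (-(if j = j' then (1:ℝ) else 0)) := by
      intro j'
      show cf (Sum.inr j') * (-(EuclideanSpace.single j' 1) j) = _
      rw [EuclideanSpace.single_apply]
    rw [Finset.sum_congr rfl (fun k _ => h1 k), Finset.sum_congr rfl (fun j' _ => h2 j')] at happ
    simp only [mul_neg, mul_ite, mul_one, mul_zero, Finset.sum_neg_distrib] at happ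
    rw [Finset.sum_ite_eq (Finset.univ : Finset (Fin n)) j (fun j' => cf (Sum.inr j'))] at happ
    simp only [Finset.mem_univ, if_true] at happ
    have : c j = (∑ k, cf (Sum.inl k) * A k j) - cf (Sum.inr j) := happ
    have hle : c j ≤ ∑ k, cf (Sum.inl k) * A k j := by
      rw [this]; linarith [hcf (Sum.inr j)]
    exact hle
  · right
    obtain ⟨P, hP⟩ : ∃ P : ProperCone ℝ E, (P : ConvexCone ℝ E) = K := CanLift.prf K ⟨hKne, hKcl⟩
    have hmem : ∀ x, x ∈ P ↔ x ∈ K := fun x => by rw [← hP]; exact Iff.rfl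
    obtain ⟨y, hy0, hyc⟩ := P.hyperplane_separation' (x₀ := (WithLp.toLp 2 c : E)) (fun h => hc ((hmem _).1 h))
    have hy : ∀ x ∈ K, 0 ≤ ⟪x, y⟫ := fun x hx => hy0 x ((hmem x).2 hx)
    have hinner : ∀ a b : E, ⟪a, b⟫ = ∑ i, a i * b i := by
      intro a b; rw [PiLp.inner_apply]; simp [RCLike.inner_apply, mul_comm]
    have hgen : ∀ k, v k ∈ K := by
      intro k
      exact ⟨fun k' => if k' = k then 1 else 0, fun k' => by positivity, by simp⟩
    refine ⟨fun j => -(y j), fun j => ?_, fun k => ?_, ?_⟩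
    · have := hy _ (hgen (Sum.inr j))
      rw [hinner] at this
      simp only [hv, Sum.elim_inr] at this
      have : 0 ≤ ∑ i, (-(EuclideanSpace.single j 1) : E) i * y i := this
      have heval : ∀ i, (-(EuclideanSpace.single j 1) : E) i * y i
          = -((if i = j then (1:ℝ) else 0) * y i) := by
        intro i; rw [PiLp.neg_apply, EuclideanSpace.single_apply]; ring
      rw [Finset.sum_congr rfl (fun i _ => heval i)] at this
      simp only [Finset.sum_neg_distrib, ite_mul, one_mul, zero_mul] at this
      rw [Finset.sum_ite_eq' (Finset.univ : Finset (Fin n)) j y] at this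
      simp only [Finset.mem_univ, if_true] at this
      simpa using this
    · have := hy _ (hgen (Sum.inl k))
      rw [hinner] at this
      simp only [hv, Sum.elim_inl] at this
      have : 0 ≤ ∑ j, A k j * y j := this
      show ∑ j, A k j * (-(y j)) ≤ 0
      simp only [mul_neg, Finset.sum_neg_distrib]; linarith
    · rw [hinner] at hyc
      have : ∑ j, y j * c j < 0 := by simpa [mul_comm] using hyc
      have h2 : ∑ j, c j * (-(y j)) = -(∑ j, y j * c j) := by
        rw [← Finset.sum_neg_distrib]; exact Finset.sum_congr rfl fun j _ => by ring
      show 0 < ∑ j, c j * (-(y j))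
      rw [h2]; linarith

section Game
variable {m n : ℕ}

private lemma pay_eq_sum_row (R : Matrix (Fin m) (Fin n) ℝ) (p : Fin m → ℝ) (q : Fin n → ℝ) :
    pay R p q = ∑ i, p i * rowPay R i q := by
  simp [pay, rowPay, Finset.mul_sum, mul_assoc]

private lemma pay_eq_sum_col (R : Matrix (Fin m) (Fin n) ℝ) (p : Fin m → ℝ) (q : Fin n → ℝ) :
    pay R p q = ∑ j, colPay R p j * q j := by
  simp only [pay, colPay, Finset.sum_mul]
  exact Finset.sum_comm

private def pure' {N : ℕ} (i : Fin N) : Fin N → ℝ := fun k => if k = i then 1 else 0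

private lemma pure_isSimplex {N : ℕ} (i : Fin N) : isSimplex (pure' i) := by
  constructor
  · intro k; unfold pure'; positivity
  · simp [pure']

private lemma pay_pure_left (R : Matrix (Fin m) (Fin n) ℝ) (i : Fin m) (q : Fin n → ℝ) :
    pay R (pure' i) q = rowPay R i q := by
  rw [pay_eq_sum_row]
  simp [pure', ite_mul]

private lemma pay_pure_right (R : Matrix (Fin m) (Fin n) ℝ) (p : Fin m → ℝ) (j : Fin n) :
    pay R p (pure' j) = colPay R p j := by
  rw [pay_eq_sum_col]
  simp [pure', mul_ite]

/-- any pair of optimal strategies is a Nash equilibrium -/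
private lemma nash_of_opt (R : Matrix (Fin m) (Fin n) ℝ) (v : ℝ) (p' : Fin m → ℝ)
    (q' : Fin n → ℝ) (hp' : isSimplex p') (hq' : isSimplex q')
    (h1 : ∀ j, v ≤ colPay R p' j) (h2 : ∀ i, rowPay R i q' ≤ v) :
    isNash R p' q' := by
  have hple : ∀ p'' : Fin m → ℝ, isSimplex p'' → pay R p'' q' ≤ v := by
    intro p'' hp''
    rw [pay_eq_sum_row]
    calc ∑ i, p'' i * rowPay R i q' ≤ ∑ i, p'' i * v :=
          Finset.sum_le_sum fun i _ => mul_le_mul_of_nonneg_left (h2 i) (hp''.1 i)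
      _ = v := by rw [← Finset.sum_mul, hp''.2, one_mul]
  have hqge : ∀ q'' : Fin n → ℝ, isSimplex q'' → v ≤ pay R p' q'' := by
    intro q'' hq''
    rw [pay_eq_sum_col]
    calc v = ∑ j, v * q'' j := by rw [← Finset.mul_sum, hq''.2, mul_one]
      _ ≤ ∑ j, colPay R p' j * q'' j :=
          Finset.sum_le_sum fun j _ => mul_le_mul_of_nonneg_right (h1 j) (hq''.1 j)
  have hval : pay R p' q' = v := le_antisymm (hple p' hp') (hqge q' hq')
  refine ⟨hp', hq', fun p'' hp'' => ?_, fun q'' hq'' => ?_⟩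
  · rw [hval]; exact hple p'' hp''
  · rw [hval]; exact hqge q'' hq''

/-- Key alternative, normalized value 0. -/
private lemma key (R : Matrix (Fin m) (Fin n) ℝ) (i : Fin m) :
    (∃ p', isSimplex p' ∧ (∀ j, 0 ≤ colPay R p' j) ∧ 0 < p' i) ∨
    (∃ q', isSimplex q' ∧ (∀ k, rowPay R k q' ≤ 0) ∧ rowPay R i q' < 0) := by
  rcases farkas R (fun j => -(R i j)) with ⟨y, hy, hyA⟩ | ⟨x, hx, hxA, hxc⟩
  · left
    have hσ : (0:ℝ) < 1 + ∑ k, y k := by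
      have : 0 ≤ ∑ k, y k := Finset.sum_nonneg fun k _ => hy k
      linarith
    set σ := 1 + ∑ k, y k with hσdef
    refine ⟨fun k => (y k + pure' i k) / σ, ⟨fun k => by
        have := hy k
        have := (pure_isSimplex i).1 k
        positivity, ?_⟩, fun j => ?_, ?_⟩
    · rw [← Finset.sum_div, Finset.sum_add_distrib, (pure_isSimplex i).2]
      rw [hσdef]
      rw [div_eq_one_iff_eq (show (1:ℝ) + ∑ k, y k ≠ 0 from ne_of_gt hσ)]
      ring
    · unfold colPay
      have : ∀ k, (y k + pure' i k) / σ * R k j = (y k * R k j + pure' i k * R k j) / σ := by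
        intro k; ring
      rw [Finset.sum_congr rfl fun k _ => this k, ← Finset.sum_div, Finset.sum_add_distrib]
      have hpure : ∑ k, pure' i k * R k j = R i j := by simp [pure', ite_mul]
      rw [hpure]
      have hnum : 0 ≤ ∑ k, y k * R k j + R i j := by
        have := hyA j; linarith
      positivity
    · have : (0:ℝ) < (y i + 1) / σ := by
        have := hy i; positivity
      simpa [pure'] using this
  · right
    have hrx : rowPay R i x < 0 := by
      have h0 : ∑ j, -R i j * x j = -(∑ j, R i j * x j) := by
        rw [← Finset.sum_neg_distrib]; exact Finset.sum_congr rfl fun j _ => by ring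
      unfold rowPay
      rw [h0] at hxc
      linarith
    have hσ : 0 < ∑ j, x j := by
      rcases (Finset.sum_nonneg fun j _ => hx j).lt_or_eq with h | h
      · exact h
      · exfalso
        have hall : ∀ j ∈ Finset.univ, x j = 0 :=
          (Finset.sum_eq_zero_iff_of_nonneg fun j _ => hx j).mp h.symm
        have : rowPay R i x = 0 := by
          unfold rowPay
          exact Finset.sum_eq_zero fun j _ => by rw [hall j (Finset.mem_univ j), mul_zero]
        linarith
    set σ := ∑ j, x j with hσdef
    refine ⟨fun j => x j / σ, ⟨fun j => div_nonneg (hx j) hσ.le, ?_⟩, fun k => ?_, ?_⟩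
    · rw [← Finset.sum_div, ← hσdef, div_self (ne_of_gt hσ)]
    · have heq : rowPay R k (fun j => x j / σ) = (∑ j, R k j * x j) / σ := by
        simp only [rowPay, Finset.sum_div, mul_div_assoc]
      rw [heq]
      exact div_nonpos_of_nonpos_of_nonneg (hxA k) hσ.le
    · have heq : rowPay R i (fun j => x j / σ) = rowPay R i x / σ := by
        simp only [rowPay, Finset.sum_div, mul_div_assoc]
      rw [heq]
      exact div_neg_of_neg_of_pos hrx hσ


/-- If `(p,q)` is the unique Nash equilibrium of `R` with value `v* = pay R p q`, then
every pure row outside `supp p` does strictly worse than `v*` against `q`, and every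
pure column outside `supp q` does strictly worse (for the minimizer) than `v*` against `p`. -/
theorem stmt1 {m n : ℕ} (R : Matrix (Fin m) (Fin n) ℝ)
    (p : Fin m → ℝ) (q : Fin n → ℝ)
    (hNE : isNash R p q)
    (huniq : ∀ p' q', isNash R p' q' → p' = p ∧ q' = q) :
    (∀ i, p i = 0 → rowPay R i q < pay R p q) ∧
      (∀ j, q j = 0 → pay R p q < colPay R p j) := by
  obtain ⟨hp, hq, hmax, hmin⟩ := hNE
  set v := pay R p q with hv
  have hrowq : ∀ k, rowPay R k q ≤ v := fun k => by
    have := hmax (pure' k) (pure_isSimplex k)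
    rwa [pay_pure_left] at this
  have hcolp : ∀ j, v ≤ colPay R p j := fun j => by
    have := hmin (pure' j) (pure_isSimplex j)
    rwa [pay_pure_right] at this
  constructor
  · intro i hpi
    set R' : Matrix (Fin m) (Fin n) ℝ := fun k j => R k j - v with hR'
    have hrow' : ∀ (k : Fin m) (q' : Fin n → ℝ), isSimplex q' →
        rowPay R' k q' = rowPay R k q' - v := by
      intro k q' hq'
      simp only [rowPay, hR', sub_mul, Finset.sum_sub_distrib, ← Finset.mul_sum, hq'.2, mul_one]
    have hcol' : ∀ (p' : Fin m → ℝ) (j : Fin n), isSimplex p' →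
        colPay R' p' j = colPay R p' j - v := by
      intro p' j hp'
      simp only [colPay, hR', mul_sub, Finset.sum_sub_distrib, ← Finset.sum_mul, hp'.2, one_mul]
    rcases key R' i with ⟨p', hp', hcge, hpi'⟩ | ⟨q', hq', hrle, hri⟩
    · exfalso
      have hnash : isNash R p' q := nash_of_opt R v p' q hp' hq
          (fun j => by have := hcge j; rw [hcol' p' j hp'] at this; linarith) hrowq
      have hEq := (huniq p' q hnash).1
      rw [hEq, hpi] at hpi'
      exact lt_irrefl 0 hpi'
    · have hnash : isNash R p q' := nash_of_opt R v p q' hp hq' hcolp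
        (fun k => by have := hrle k; rw [hrow' k q' hq'] at this; linarith)
      have hEq := (huniq p q' hnash).2
      have hri' := hri
      rw [hrow' i q' hq', hEq] at hri'
      linarith
  · intro j hqj
    set S : Matrix (Fin n) (Fin m) ℝ := fun j' i' => v - R i' j' with hS
    have hrowS : ∀ (j' : Fin n) (w : Fin m → ℝ), isSimplex w →
        rowPay S j' w = v - colPay R w j' := by
      intro j' w hw
      simp only [rowPay, colPay, hS, sub_mul, Finset.sum_sub_distrib, ← Finset.mul_sum,
        hw.2, mul_one]
      congr 1
      exact Finset.sum_congr rfl fun i' _ => mul_comm _ _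
    have hcolS : ∀ (w : Fin n → ℝ) (i' : Fin m), isSimplex w →
        colPay S w i' = v - rowPay R i' w := by
      intro w i' hw
      simp only [colPay, rowPay, hS, mul_sub, Finset.sum_sub_distrib, ← Finset.sum_mul,
        hw.2, one_mul]
      congr 1
      exact Finset.sum_congr rfl fun j' _ => mul_comm _ _
    rcases key S j with ⟨p'', hp'', hcge, hpj⟩ | ⟨q'', hq'', hrle, hrj⟩
    · exfalso
      have hnash : isNash R p p'' := nash_of_opt R v p p'' hp hp'' hcolp
        (fun i' => by have := hcge i'; rw [hcolS p'' i' hp''] at this; linarith)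
      have hEq := (huniq p p'' hnash).2
      rw [hEq, hqj] at hpj
      exact lt_irrefl 0 hpj
    · have hnash : isNash R q'' q := nash_of_opt R v q'' q hq'' hq
        (fun j' => by have := hrle j'; rw [hrowS j' q'' hq''] at this; linarith) hrowq
      have hEq := (huniq q'' q hnash).1
      have h2 := hrj
      rw [hrowS j q'' hq'', hEq] at h2
      linarith
end Game
end

section
/- Let (p,q) be a Nash equilibrium of a zero-sum matrix game R with value v, satisfying the SIISOW condition: e_iᵀRq = v for all i ∈ I := supp(p), pᵀRe_j = v for all j ∈ J := supp(q), e_iᵀRq < v for all i ∉ I, and pᵀRe_j > v for all j ∉ J. If additionally the (|I|+1)×(|J|+1) block matrix [[R_{IJ}, -1]; [1ᵀ, 0]] is invertible, then (p,q) is the unique Nash equilibrium of R. -/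
open Finset

/-- The block matrix `[[R_IJ, -1]; [1ᵀ, 0]]` on the supports of `p` and `q`. -/
noncomputable def blockMat {m n : ℕ} (R : Matrix (Fin m) (Fin n) ℝ) (p : Fin m → ℝ)
    (q : Fin n → ℝ) :
    Matrix ({i : Fin m // 0 < p i} ⊕ Unit) ({j : Fin n // 0 < q j} ⊕ Unit) ℝ :=
  Matrix.of fun a b =>
    match a, b with
    | Sum.inl i, Sum.inl j => R i.1 j.1
    | Sum.inl _, Sum.inr _ => -1
    | Sum.inr _, Sum.inl _ => 1
    | Sum.inr _, Sum.inr _ => 0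

open Matrix

lemma pay_rows' {m n : ℕ} (R : Matrix (Fin m) (Fin n) ℝ) (p : Fin m → ℝ) (q : Fin n → ℝ) :
    pay R p q = ∑ i, p i * rowPay R i q := by
  simp [pay, rowPay, Finset.mul_sum, mul_assoc]

lemma pay_cols' {m n : ℕ} (R : Matrix (Fin m) (Fin n) ℝ) (p : Fin m → ℝ) (q : Fin n → ℝ) :
    pay R p q = ∑ j, colPay R p j * q j := by
  rw [pay, Finset.sum_comm]
  simp [colPay, Finset.sum_mul]

lemma single_simplex' {k : ℕ} (i : Fin k) : isSimplex (Pi.single i (1:ℝ)) := by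
  constructor
  · intro j; by_cases h : j = i <;> simp [Pi.single_apply, h]
  · simp

lemma pay_single_left' {m n : ℕ} (R : Matrix (Fin m) (Fin n) ℝ) (i : Fin m) (q : Fin n → ℝ) :
    pay R (Pi.single i 1) q = rowPay R i q := by
  rw [pay_rows']; simp [Pi.single_apply]

lemma pay_single_right' {m n : ℕ} (R : Matrix (Fin m) (Fin n) ℝ) (p : Fin m → ℝ) (j : Fin n) :
    pay R p (Pi.single j 1) = colPay R p j := by
  rw [pay_cols']; simp [Pi.single_apply]

lemma subsum' {k : ℕ} (s : Fin k → ℝ) (f w : Fin k → ℝ)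
    (hw : ∀ j, ¬ 0 < s j → w j = 0) :
    ∑ j : {j : Fin k // 0 < s j}, f j.1 * w j.1 = ∑ j, f j * w j := by
  classical
  rw [← Finset.sum_subtype (Finset.univ.filter fun j => 0 < s j) (by simp) (fun j => f j * w j)]
  apply Finset.sum_filter_of_ne
  intro x _ hx
  by_contra h
  exact hx (by rw [hw x h, mul_zero])

/-- SIISOW together with invertibility of the block matrix implies that `(p,q)` is the
unique Nash equilibrium of `R`. -/
theorem stmt2 {m n : ℕ} (R : Matrix (Fin m) (Fin n) ℝ)
    (p : Fin m → ℝ) (q : Fin n → ℝ) (v : ℝ)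
    (hp : isSimplex p) (hq : isSimplex q)
    (hv : v = pay R p q)
    (hrowIn : ∀ i, 0 < p i → rowPay R i q = v)
    (hcolIn : ∀ j, 0 < q j → colPay R p j = v)
    (hrowOut : ∀ i, p i = 0 → rowPay R i q < v)
    (hcolOut : ∀ j, q j = 0 → v < colPay R p j)
    (hINV : Function.Bijective (Matrix.mulVecLin (blockMat R p q))) :
    isNash R p q ∧ ∀ p' q', isNash R p' q' → p' = p ∧ q' = q := by
  classical
  have hrow_le : ∀ i, rowPay R i q ≤ v := by
    intro i
    rcases (hp.1 i).lt_or_eq with h | h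
    · exact le_of_eq (hrowIn i h)
    · exact le_of_lt (hrowOut i h.symm)
  have hcol_ge : ∀ j, v ≤ colPay R p j := by
    intro j
    rcases (hq.1 j).lt_or_eq with h | h
    · exact le_of_eq (hcolIn j h).symm
    · exact le_of_lt (hcolOut j h.symm)
  have hA1 : ∀ p', isSimplex p' → pay R p' q ≤ pay R p q := by
    intro p' hp'
    rw [pay_rows', ← hv]
    calc ∑ i, p' i * rowPay R i q ≤ ∑ i, p' i * v :=
          Finset.sum_le_sum fun i _ => mul_le_mul_of_nonneg_left (hrow_le i) (hp'.1 i)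
      _ = v := by rw [← Finset.sum_mul, hp'.2, one_mul]
  have hA2 : ∀ q', isSimplex q' → pay R p q ≤ pay R p q' := by
    intro q' hq'
    rw [pay_cols' R p q', ← hv]
    calc v = ∑ j, v * q' j := by rw [← Finset.mul_sum, hq'.2, mul_one]
      _ ≤ ∑ j, colPay R p j * q' j :=
          Finset.sum_le_sum fun j _ => mul_le_mul_of_nonneg_right (hcol_ge j) (hq'.1 j)
  refine ⟨⟨hp, hq, hA1, hA2⟩, ?_⟩
  intro p' q' hN'
  obtain ⟨hp', hq', hB1, hB2⟩ := hN'
  have h1 : pay R p' q ≤ v := hv ▸ hA1 p' hp'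
  have h2 : v ≤ pay R p q' := hv ▸ hA2 q' hq'
  have h3 : pay R p q' ≤ pay R p' q' := hB1 p hp
  have h4 : pay R p' q' ≤ pay R p' q := hB2 q hq
  have hp'q : pay R p' q = v := by linarith
  have hpq' : pay R p q' = v := by linarith
  have hw0 : pay R p' q' = v := by linarith
  -- supports of p', q' are contained in those of p, q
  have hsupp_p' : ∀ i, ¬ 0 < p i → p' i = 0 := by
    intro i hi
    by_contra hne
    have hip : 0 < p' i := lt_of_le_of_ne (hp'.1 i) (Ne.symm hne)
    have hpi : p i = 0 := le_antisymm (not_lt.1 hi) (hp.1 i)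
    have hlt : pay R p' q < v := by
      rw [pay_rows']
      calc ∑ k, p' k * rowPay R k q < ∑ k, p' k * v := by
            apply Finset.sum_lt_sum
            · intro k _
              exact mul_le_mul_of_nonneg_left (hrow_le k) (hp'.1 k)
            · exact ⟨i, Finset.mem_univ i,
                mul_lt_mul_of_pos_left (hrowOut i hpi) hip⟩
        _ = v := by rw [← Finset.sum_mul, hp'.2, one_mul]
    linarith
  have hsupp_q' : ∀ j, ¬ 0 < q j → q' j = 0 := by
    intro j hj
    by_contra hne
    have hjq : 0 < q' j := lt_of_le_of_ne (hq'.1 j) (Ne.symm hne)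
    have hqj : q j = 0 := le_antisymm (not_lt.1 hj) (hq.1 j)
    have hgt : v < pay R p q' := by
      rw [pay_cols']
      calc v = ∑ k, v * q' k := by rw [← Finset.mul_sum, hq'.2, mul_one]
        _ < ∑ k, colPay R p k * q' k := by
            apply Finset.sum_lt_sum
            · intro k _
              exact mul_le_mul_of_nonneg_right (hcol_ge k) (hq'.1 k)
            · exact ⟨j, Finset.mem_univ j,
                mul_lt_mul_of_pos_right (hcolOut j hqj) hjq⟩
    linarith
  -- pure-strategy bounds against the other equilibrium
  have hrow'_le : ∀ i, rowPay R i q' ≤ v := by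
    intro i
    have := hB1 (Pi.single i 1) (single_simplex' i)
    rw [pay_single_left'] at this
    linarith
  have hcol'_ge : ∀ j, v ≤ colPay R p' j := by
    intro j
    have := hB2 (Pi.single j 1) (single_simplex' j)
    rw [pay_single_right'] at this
    linarith
  have hrowIn' : ∀ i, 0 < p i → rowPay R i q' = v := by
    intro i hi
    by_contra hne
    have hlt : rowPay R i q' < v := lt_of_le_of_ne (hrow'_le i) hne
    have hlt2 : pay R p q' < v := by
      rw [pay_rows']
      calc ∑ k, p k * rowPay R k q' < ∑ k, p k * v := by
            apply Finset.sum_lt_sum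
            · intro k _; exact mul_le_mul_of_nonneg_left (hrow'_le k) (hp.1 k)
            · exact ⟨i, Finset.mem_univ i, mul_lt_mul_of_pos_left hlt hi⟩
        _ = v := by rw [← Finset.sum_mul, hp.2, one_mul]
    linarith
  have hcolIn' : ∀ j, 0 < q j → colPay R p' j = v := by
    intro j hj
    by_contra hne
    have hgt : v < colPay R p' j := lt_of_le_of_ne (hcol'_ge j) (Ne.symm hne)
    have hgt2 : v < pay R p' q := by
      rw [pay_cols']
      calc v = ∑ k, v * q k := by rw [← Finset.mul_sum, hq.2, mul_one]
        _ < ∑ k, colPay R p' k * q k := by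
            apply Finset.sum_lt_sum
            · intro k _; exact mul_le_mul_of_nonneg_right (hcol'_ge k) (hq.1 k)
            · exact ⟨j, Finset.mem_univ j, mul_lt_mul_of_pos_right hgt hj⟩
    linarith
  -- a generic computation of the block matrix acting on a column-type vector
  have key : ∀ (w : Fin n → ℝ), (∀ j, ¬ 0 < q j → w j = 0) →
      (∀ i, 0 < p i → rowPay R i w = v) → (∑ j, w j = 1) →
      blockMat R p q *ᵥ (Sum.elim (fun j : {j : Fin n // 0 < q j} => w j.1) fun _ => v)
        = Sum.elim (fun _ => (0:ℝ)) fun _ => 1 := by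
    intro w hw hrow hsum
    funext a
    cases a with
    | inl i =>
      have hcomp : (blockMat R p q *ᵥ
          (Sum.elim (fun j : {j : Fin n // 0 < q j} => w j.1) fun _ => v)) (Sum.inl i)
          = (∑ j : {j : Fin n // 0 < q j}, R i.1 j.1 * w j.1) + (-1) * v := by
        simp [Matrix.mulVec, dotProduct, Fintype.sum_sum_type, blockMat]
      rw [hcomp, subsum' q (fun j => R i.1 j) w hw]
      have : (∑ j, R i.1 j * w j) = v := hrow i.1 i.2
      rw [this] ; simp
    | inr u =>
      have hcomp : (blockMat R p q *ᵥ
          (Sum.elim (fun j : {j : Fin n // 0 < q j} => w j.1) fun _ => v)) (Sum.inr u)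
          = ∑ j : {j : Fin n // 0 < q j}, w j.1 := by
        simp [Matrix.mulVec, dotProduct, Fintype.sum_sum_type, blockMat]
      rw [hcomp]
      have : ∑ j : {j : Fin n // 0 < q j}, w j.1
          = ∑ j : {j : Fin n // 0 < q j}, (1:ℝ) * w j.1 := by simp
      rw [this, subsum' q (fun _ => (1:ℝ)) w hw]
      simpa using hsum
  -- q' = q by injectivity
  have hqq : q' = q := by
    have e1 := key q' hsupp_q' hrowIn' hq'.2
    have e2 := key q (fun j hj => le_antisymm (not_lt.1 hj) (hq.1 j)) hrowIn hq.2
    have heq := hINV.1 (a₁ := Sum.elim (fun j : {j : Fin n // 0 < q j} => q' j.1) fun _ => v)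
      (a₂ := Sum.elim (fun j : {j : Fin n // 0 < q j} => q j.1) fun _ => v)
      (by rw [Matrix.mulVecLin_apply, Matrix.mulVecLin_apply, e1, e2])
    funext j
    by_cases hj : 0 < q j
    · exact congrFun heq (Sum.inl ⟨j, hj⟩)
    · rw [hsupp_q' j hj, le_antisymm (not_lt.1 hj) (hq.1 j)]
  -- p' = p by injectivity of vecMul (from surjectivity of mulVec)
  have hvecinj : ∀ z z' : ({i : Fin m // 0 < p i} ⊕ Unit) → ℝ,
      Matrix.vecMul z (blockMat R p q) = Matrix.vecMul z' (blockMat R p q) → z = z' := by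
    intro z z' h
    have hd : ∀ w, dotProduct (z - z') w = 0 := by
      intro w
      obtain ⟨y, hy⟩ := hINV.2 w
      rw [← hy, Matrix.mulVecLin_apply, Matrix.dotProduct_mulVec, Matrix.sub_vecMul, h,
        sub_self, zero_dotProduct]
    have h0 : z - z' = 0 := by
      have := hd (z - z')
      rwa [dotProduct_self_eq_zero] at this
    exact sub_eq_zero.mp h0
  have keyL : ∀ (w : Fin m → ℝ), (∀ i, ¬ 0 < p i → w i = 0) →
      (∀ j, 0 < q j → colPay R w j = v) → (∑ i, w i = 1) →
      Matrix.vecMul (Sum.elim (fun i : {i : Fin m // 0 < p i} => w i.1) fun _ => -v)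
        (blockMat R p q) = Sum.elim (fun _ => (0:ℝ)) fun _ => -1 := by
    intro w hw hcol hsum
    funext b
    cases b with
    | inl j =>
      have hcomp : (Matrix.vecMul (Sum.elim (fun i : {i : Fin m // 0 < p i} => w i.1) fun _ => -v)
          (blockMat R p q)) (Sum.inl j)
          = (∑ i : {i : Fin m // 0 < p i}, w i.1 * R i.1 j.1) + (-v) := by
        simp [Matrix.vecMul, dotProduct, Fintype.sum_sum_type, blockMat]
      rw [hcomp]
      have hs : ∑ i : {i : Fin m // 0 < p i}, w i.1 * R i.1 j.1
          = ∑ i, R i j.1 * w i := by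
        rw [← subsum' p (fun i => R i j.1) w hw]
        exact Finset.sum_congr rfl fun i _ => mul_comm _ _
      rw [hs]
      have : (∑ i, R i j.1 * w i) = v := by
        rw [← hcol j.1 j.2, colPay]
        exact Finset.sum_congr rfl fun i _ => mul_comm _ _
      rw [this]; simp
    | inr u =>
      have hcomp : (Matrix.vecMul (Sum.elim (fun i : {i : Fin m // 0 < p i} => w i.1) fun _ => -v)
          (blockMat R p q)) (Sum.inr u)
          = -∑ i : {i : Fin m // 0 < p i}, w i.1 := by
        simp [Matrix.vecMul, dotProduct, Fintype.sum_sum_type, blockMat]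
      rw [hcomp]
      have : ∑ i : {i : Fin m // 0 < p i}, w i.1
          = ∑ i : {i : Fin m // 0 < p i}, (1:ℝ) * w i.1 := by simp
      rw [this, subsum' p (fun _ => (1:ℝ)) w hw]
      simp [hsum]
  have hpp : p' = p := by
    have e1 := keyL p' hsupp_p' hcolIn' hp'.2
    have e2 := keyL p (fun i hi => le_antisymm (not_lt.1 hi) (hp.1 i)) hcolIn hp.2
    have heq := hvecinj _ _ (e1.trans e2.symm)
    funext i
    by_cases hi : 0 < p i
    · exact congrFun heq (Sum.inl ⟨i, hi⟩)
    · rw [hsupp_p' i hi, le_antisymm (not_lt.1 hi) (hp.1 i)]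
  exact ⟨hpp, hqq⟩
end

section
/- Let R ∈ ℝ^{m×n} have a Nash equilibrium (p,q) with value v* satisfying SIISOW, and suppose the homogeneous system R_{IJ} δ = x·1, 1ᵀδ = 0 (with δ ∈ ℝ^{|J|}, x ∈ ℝ) has a nonzero solution. Then any such solution has x = 0 and δ ≠ 0 with R_{IJ} δ = 0. -/
open Finset

/-- For a SIISOW Nash equilibrium `(p,q)` of `R`, any nonzero solution `(δ, x)` of the
homogeneous system `R_IJ δ = x·1, 1ᵀδ = 0` has `x = 0` and `δ ≠ 0` with `R_IJ δ = 0`. -/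
theorem stmt4 {m n : ℕ} (R : Matrix (Fin m) (Fin n) ℝ)
    (p : Fin m → ℝ) (q : Fin n → ℝ) (v : ℝ)
    (hNE : isNash R p q) (hv : v = pay R p q)
    (hrowIn : ∀ i, 0 < p i → rowPay R i q = v)
    (hcolIn : ∀ j, 0 < q j → colPay R p j = v)
    (hrowOut : ∀ i, p i = 0 → rowPay R i q < v)
    (hcolOut : ∀ j, q j = 0 → v < colPay R p j)
    (δ : {j : Fin n // 0 < q j} → ℝ) (x : ℝ)
    (hnz : ¬(δ = 0 ∧ x = 0))
    (hsys : ∀ i : {i : Fin m // 0 < p i}, ∑ j : {j : Fin n // 0 < q j}, R i.1 j.1 * δ j = x)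
    (hsum : ∑ j : {j : Fin n // 0 < q j}, δ j = 0) :
    x = 0 ∧ δ ≠ 0 ∧
      ∀ i : {i : Fin m // 0 < p i}, ∑ j : {j : Fin n // 0 < q j}, R i.1 j.1 * δ j = 0 := by
  obtain ⟨⟨hp0, hp1⟩, _, _, _⟩ := hNE
  have hsupp : ∑ i : {i : Fin m // 0 < p i}, p i.1 = 1 := by
    rw [← Finset.sum_subtype (Finset.univ.filter (fun i => 0 < p i))
      (by simp) (fun i => p i)]
    rw [Finset.sum_filter_of_ne (fun i _ hne => lt_of_le_of_ne (hp0 i) (Ne.symm hne))]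
    exact hp1
  have hcol : ∀ j : Fin n, ∑ i : {i : Fin m // 0 < p i}, p i.1 * R i.1 j = colPay R p j := by
    intro j
    rw [← Finset.sum_subtype (Finset.univ.filter (fun i => 0 < p i))
      (by simp) (fun i => p i * R i j)]
    rw [Finset.sum_filter_of_ne]
    · rfl
    · intro i _ hne
      exact lt_of_le_of_ne (hp0 i) (fun h => hne (by rw [← h, zero_mul]))
  have hx : x = 0 := by
    have h1 : x = ∑ i : {i : Fin m // 0 < p i}, p i.1 * x := by
      rw [← Finset.sum_mul, hsupp, one_mul]
    have h2 : ∀ i : {i : Fin m // 0 < p i},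
        p i.1 * x = ∑ j : {j : Fin n // 0 < q j}, p i.1 * (R i.1 j.1 * δ j) := by
      intro i; rw [← Finset.mul_sum, hsys i]
    rw [h1, Finset.sum_congr rfl (fun i _ => h2 i), Finset.sum_comm]
    have h3 : ∀ j : {j : Fin n // 0 < q j},
        ∑ i : {i : Fin m // 0 < p i}, p i.1 * (R i.1 j.1 * δ j) = v * δ j := by
      intro j
      have hc := hcol j.1
      rw [hcolIn j.1 j.2] at hc
      calc ∑ i : {i : Fin m // 0 < p i}, p i.1 * (R i.1 j.1 * δ j)
          = (∑ i : {i : Fin m // 0 < p i}, p i.1 * R i.1 j.1) * δ j := by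
            rw [Finset.sum_mul]; exact Finset.sum_congr rfl (fun i _ => (mul_assoc _ _ _).symm)
        _ = v * δ j := by rw [hc]
    rw [Finset.sum_congr rfl (fun j _ => h3 j), ← Finset.mul_sum, hsum, mul_zero]
  refine ⟨hx, ?_, fun i => by rw [hsys i, hx]⟩
  intro hδ
  exact hnz ⟨hδ, hx⟩
end

section
/- Let (p,q) be strategies with equal support I = J = {0,...,k−1}, k ≥ 2, all supported entries positive. Define the Extended Rock-Paper-Scissors matrix R^{eRPS} of size |A₁|×|A₂| by: R_{ij} = −c/(p_i q_j) if i,j < k and j ≡ i+1 (mod k); R_{ij} = c/(p_i q_j) if i,j < k and j ≡ i+2 (mod k); R_{ij} = 1 if i < k ≤ j; R_{ij} = −1 if j < k ≤ i; R_{ij} = 0 otherwise, where c = min_{i<k} min(p_i q_{(i+1) mod k}, p_i q_{(i+2) mod k}). Then e_iᵀ R^{eRPS} q = 0 for all i ∈ I and e_iᵀ R^{eRPS} q = −1 for all i ∉ I. -/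
open Finset

/-- Extension of `p : Fin m → ℝ` to `ℕ` by zero. -/
noncomputable def pext {m : ℕ} (p : Fin m → ℝ) (i : ℕ) : ℝ :=
  if h : i < m then p ⟨i, h⟩ else 0

/-- The normalizing constant `c` of the extended Rock-Paper-Scissors game. -/
noncomputable def eRPSc {m n : ℕ} (k : ℕ) (p : Fin m → ℝ) (q : Fin n → ℝ) : ℝ :=
  ⨅ i : Fin k, min (pext p i * pext q (((i : ℕ) + 1) % k))
    (pext p i * pext q (((i : ℕ) + 2) % k))

/-- The extended Rock-Paper-Scissors payoff matrix for target `(p, q)` with common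
support `{0, …, k-1}`. -/
noncomputable def eRPS {m n : ℕ} (k : ℕ) (p : Fin m → ℝ) (q : Fin n → ℝ) :
    Matrix (Fin m) (Fin n) ℝ :=
  Matrix.of fun i j =>
    if (i : ℕ) < k ∧ (j : ℕ) < k then
      if 1 < k ∧ (j : ℕ) = ((i : ℕ) + 1) % k then -(eRPSc k p q) / (p i * q j)
      else if 1 < k ∧ (j : ℕ) = ((i : ℕ) + 2) % k then eRPSc k p q / (p i * q j)
      else 0
    else if (i : ℕ) < k then 1
    else if (j : ℕ) < k then -1
    else 0

/-- Row payoffs of the eRPS game: in-support pure rows obtain `0` against `q`,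
out-of-support pure rows obtain `-1`. -/
theorem stmt6 {m n : ℕ} (k : ℕ) (hk : 2 ≤ k)
    (p : Fin m → ℝ) (q : Fin n → ℝ)
    (hp : isSimplex p) (hq : isSimplex q)
    (hsuppP : ∀ i : Fin m, 0 < p i ↔ (i : ℕ) < k)
    (hsuppQ : ∀ j : Fin n, 0 < q j ↔ (j : ℕ) < k) :
    (∀ i : Fin m, (i : ℕ) < k → rowPay (eRPS k p q) i q = 0) ∧
      (∀ i : Fin m, k ≤ (i : ℕ) → rowPay (eRPS k p q) i q = -1) := by
  have hkpos : 0 < k := by omega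
  have hk1 : 1 < k := by omega
  haveI : Nonempty (Fin k) := ⟨⟨0, hkpos⟩⟩
  have hq0 : ∀ j : Fin n, k ≤ (j : ℕ) → q j = 0 := by
    intro j hj
    by_contra h
    exact absurd ((hsuppQ j).mp (lt_of_le_of_ne (hq.1 j) (Ne.symm h))) (not_lt.mpr hj)
  constructor
  · intro i hi
    by_cases hn : k ≤ n
    · -- both special columns exist
      set c := eRPSc k p q with hc
      set j1 : Fin n := ⟨((i : ℕ) + 1) % k, lt_of_lt_of_le (Nat.mod_lt _ hkpos) hn⟩ with hj1
      set j2 : Fin n := ⟨((i : ℕ) + 2) % k, lt_of_lt_of_le (Nat.mod_lt _ hkpos) hn⟩ with hj2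
      have hmodne : ((i : ℕ) + 1) % k ≠ ((i : ℕ) + 2) % k := by
        intro h
        have hd := (Nat.modEq_iff_dvd (n := k) (a := (i : ℕ) + 1) (b := (i : ℕ) + 2)).mp h
        have : ((i : ℕ) : ℤ) + 2 - ((i : ℕ) + 1) = 1 := by ring
        rw [show (((i : ℕ) + 2 : ℕ) : ℤ) - (((i : ℕ) + 1 : ℕ) : ℤ) = 1 by push_cast; ring] at hd
        have := Int.le_of_dvd one_pos hd
        omega
      have hne : j1 ≠ j2 := by
        intro h
        exact hmodne (congrArg Fin.val h)
      have hq1 : 0 < q j1 := (hsuppQ j1).mpr (Nat.mod_lt _ hkpos)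
      have hq2 : 0 < q j2 := (hsuppQ j2).mpr (Nat.mod_lt _ hkpos)
      have hpi : 0 < p i := (hsuppP i).mpr hi
      have e1 : eRPS k p q i j1 = -c / (p i * q j1) := by
        simp only [eRPS, Matrix.of_apply]
        rw [if_pos (show (i : ℕ) < k ∧ (j1 : ℕ) < k from ⟨hi, Nat.mod_lt _ hkpos⟩)]
        simp [hk1, hc, hj1]
      have e2 : eRPS k p q i j2 = c / (p i * q j2) := by
        simp only [eRPS, Matrix.of_apply]
        rw [if_pos (show (i : ℕ) < k ∧ (j2 : ℕ) < k from ⟨hi, Nat.mod_lt _ hkpos⟩),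
          if_neg (show ¬(1 < k ∧ (j2 : ℕ) = ((i : ℕ) + 1) % k) from fun h => hmodne h.2.symm)]
        simp [hk1, hc, hj2]
      have hsum : rowPay (eRPS k p q) i q = ∑ j ∈ ({j1, j2} : Finset (Fin n)),
          eRPS k p q i j * q j := by
        rw [rowPay]
        refine (Finset.sum_subset (Finset.subset_univ _) ?_).symm
        intro j _ hj
        simp only [Finset.mem_insert, Finset.mem_singleton, not_or] at hj
        by_cases hjk : (j : ℕ) < k
        · have h1 : ¬ (1 < k ∧ (j : ℕ) = ((i : ℕ) + 1) % k) := by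
            rintro ⟨-, h⟩; exact hj.1 (Fin.ext h)
          have h2 : ¬ (1 < k ∧ (j : ℕ) = ((i : ℕ) + 2) % k) := by
            rintro ⟨-, h⟩; exact hj.2 (Fin.ext h)
          simp only [eRPS, Matrix.of_apply]
          rw [if_pos (show (i : ℕ) < k ∧ (j : ℕ) < k from ⟨hi, hjk⟩), if_neg h1, if_neg h2,
            zero_mul]
        · rw [hq0 j (le_of_not_gt hjk), mul_zero]
      rw [hsum, Finset.sum_pair hne, e1, e2]
      field_simp
      ring
    · -- columns beyond n are missing, so c = 0
      push_neg at hn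
      have hn1 : 1 ≤ n := by
        rcases Nat.eq_zero_or_pos n with h0 | h0
        · exfalso; have := hq.2; subst h0; simp at this
        · exact h0
      have hle : eRPSc k p q ≤ 0 := by
        have hi0 : (n - 1) < k := by omega
        have : (⨅ i : Fin k, min (pext p i * pext q (((i : ℕ) + 1) % k))
            (pext p i * pext q (((i : ℕ) + 2) % k))) ≤
            min (pext p (n - 1) * pext q (((n - 1) + 1) % k))
              (pext p (n - 1) * pext q (((n - 1) + 2) % k)) := by
          exact ciInf_le (Finite.bddBelow_range _) (⟨n - 1, hi0⟩ : Fin k)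
        refine le_trans this ?_
        refine le_trans (min_le_left _ _) ?_
        have hmod : ((n - 1) + 1) % k = n := by
          rw [Nat.sub_add_cancel hn1, Nat.mod_eq_of_lt hn]
        rw [hmod]
        have hqn : pext q n = 0 := dif_neg (lt_irrefl n)
        rw [hqn, mul_zero]
      have hge : 0 ≤ eRPSc k p q := by
        refine le_ciInf fun i' => le_min ?_ ?_ <;>
        · apply mul_nonneg <;>
          · rw [pext]; split
            · first
              | exact hp.1 _
              | exact hq.1 _
            · exact le_refl 0
      have hc0 : eRPSc k p q = 0 := le_antisymm hle hge
      rw [rowPay]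
      refine Finset.sum_eq_zero fun j _ => ?_
      by_cases hjk : (j : ℕ) < k
      · simp only [eRPS, Matrix.of_apply, hc0, neg_zero, zero_div]
        rw [if_pos (show (i : ℕ) < k ∧ (j : ℕ) < k from ⟨hi, hjk⟩)]
        simp
      · rw [hq0 j (le_of_not_gt hjk), mul_zero]
  · intro i hi
    have hterm : ∀ j : Fin n, eRPS k p q i j * q j = -q j := by
      intro j
      by_cases hjk : (j : ℕ) < k
      · have hik : ¬ (i : ℕ) < k := not_lt.mpr hi
        simp only [eRPS, Matrix.of_apply]
        rw [if_neg (show ¬((i : ℕ) < k ∧ (j : ℕ) < k) from fun h => hik h.1),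
          if_neg hik, if_pos hjk]
        ring
      · rw [hq0 j (le_of_not_gt hjk), mul_zero, neg_zero]
    rw [rowPay]
    simp only [hterm]
    rw [Finset.sum_neg_distrib, hq.2]
end

section
/- With R^{eRPS} as defined (for equal supports I = J = {0,...,k−1}, k ≥ 2), pᵀ R^{eRPS} e_j = 0 for all j ∈ J and pᵀ R^{eRPS} e_j = 1 for all j ∉ J; consequently pᵀ R^{eRPS} q = 0. -/
open Finset

lemma mod_shift (k a d e : ℕ) (ha : a < k) (h : d + e = k) :
    ((a + d) % k + e) % k = a := by
  rw [Nat.mod_add_mod, show a + d + e = a + k by omega, Nat.add_mod_right,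
    Nat.mod_eq_of_lt ha]

lemma sum_fin_ite {m : ℕ} (a : ℕ) (v : ℝ) :
    ∑ i : Fin m, (if (i : ℕ) = a then v else 0) = if a < m then v else 0 := by
  split
  · next h =>
    rw [Finset.sum_eq_single (⟨a, h⟩ : Fin m)]
    · simp
    · intro b _ hb
      rw [if_neg (by simpa [Fin.ext_iff] using hb)]
    · simp
  · next h =>
    apply Finset.sum_eq_zero
    intro i _
    have := i.isLt
    rw [if_neg (by omega)]

/-- Column payoffs of the eRPS game: in-support pure columns yield `0` against `p`,
out-of-support pure columns yield `1`; consequently `pᵀ R^{eRPS} q = 0`. -/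
theorem stmt7 {m n : ℕ} (k : ℕ) (hk : 2 ≤ k)
    (p : Fin m → ℝ) (q : Fin n → ℝ)
    (hp : isSimplex p) (hq : isSimplex q)
    (hsuppP : ∀ i : Fin m, 0 < p i ↔ (i : ℕ) < k)
    (hsuppQ : ∀ j : Fin n, 0 < q j ↔ (j : ℕ) < k) :
    (∀ j : Fin n, (j : ℕ) < k → colPay (eRPS k p q) p j = 0) ∧
      (∀ j : Fin n, k ≤ (j : ℕ) → colPay (eRPS k p q) p j = 1) ∧
      pay (eRPS k p q) p q = 0 := by
  have hkpos : 0 < k := by omega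
  have hp0 : ∀ i : Fin m, k ≤ (i : ℕ) → p i = 0 := fun i hi =>
    le_antisymm (not_lt.1 fun h => absurd ((hsuppP i).1 h) (by omega)) (hp.1 i)
  have hq0 : ∀ j : Fin n, k ≤ (j : ℕ) → q j = 0 := fun j hj =>
    le_antisymm (not_lt.1 fun h => absurd ((hsuppQ j).1 h) (by omega)) (hq.1 j)
  have hnk : Nonempty (Fin k) := ⟨⟨0, hkpos⟩⟩
  have hbdd : BddBelow (Set.range fun i : Fin k =>
      min (pext p i * pext q (((i : ℕ) + 1) % k))
        (pext p i * pext q (((i : ℕ) + 2) % k))) :=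
    Set.Finite.bddBelow (Set.finite_range _)
  have hpext : ∀ a : ℕ, 0 ≤ pext p a := by
    intro a; unfold pext; split
    · exact hp.1 _
    · exact le_rfl
  have hqext : ∀ a : ℕ, 0 ≤ pext q a := by
    intro a; unfold pext; split
    · exact hq.1 _
    · exact le_rfl
  have hc_nonneg : 0 ≤ eRPSc k p q := by
    apply le_ciInf
    intro i
    exact le_min (mul_nonneg (hpext _) (hqext _)) (mul_nonneg (hpext _) (hqext _))
  have hc0 : ∀ a : ℕ, a < k → m ≤ a → eRPSc k p q = 0 := by
    intro a hak ham
    have h1 := ciInf_le hbdd (⟨a, hak⟩ : Fin k)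
    have h2 : pext p a = 0 := dif_neg (by omega)
    refine le_antisymm ?_ hc_nonneg
    calc eRPSc k p q ≤ _ := h1
    _ ≤ pext p a * pext q ((a + 1) % k) := min_le_left _ _
    _ = 0 := by rw [h2, zero_mul]
  have part1 : ∀ j : Fin n, (j : ℕ) < k → colPay (eRPS k p q) p j = 0 := by
    intro j hj
    have hqj : 0 < q j := (hsuppQ j).2 hj
    set i0 : ℕ := ((j : ℕ) + (k - 1)) % k with hi0def
    set i1 : ℕ := ((j : ℕ) + (k - 2)) % k with hi1def
    have hi0k : i0 < k := Nat.mod_lt _ hkpos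
    have hi1k : i1 < k := Nat.mod_lt _ hkpos
    have hi0j : (i0 + 1) % k = (j : ℕ) := mod_shift k j (k - 1) 1 hj (by omega)
    have hi1j : (i1 + 2) % k = (j : ℕ) := mod_shift k j (k - 2) 2 hj (by omega)
    have hne : i0 ≠ i1 := by
      intro h
      have h2 := hi1j
      rw [← h, hi0def, Nat.mod_add_mod,
        show (j : ℕ) + (k - 1) + 2 = ((j : ℕ) + 1) + k from by omega,
        Nat.add_mod_right] at h2
      rcases Nat.lt_or_ge ((j : ℕ) + 1) k with hlt | hge
      · rw [Nat.mod_eq_of_lt hlt] at h2; omega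
      · rw [show (j : ℕ) + 1 = k from by omega, Nat.mod_self] at h2; omega
    have key : ∀ i : Fin m, p i * eRPS k p q i j =
        (if (i : ℕ) = i0 then -(eRPSc k p q / q j) else 0) +
          (if (i : ℕ) = i1 then eRPSc k p q / q j else 0) := by
      intro i
      by_cases hik : (i : ℕ) < k
      · have hpi : 0 < p i := (hsuppP i).2 hik
        simp only [eRPS, Matrix.of_apply, if_pos (⟨hik, hj⟩ : (i : ℕ) < k ∧ (j : ℕ) < k)]
        by_cases h1 : (j : ℕ) = ((i : ℕ) + 1) % k
        · have hii0 : (i : ℕ) = i0 := by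
            rw [hi0def, h1, mod_shift k i 1 (k - 1) hik (by omega)]
          have hii1 : (i : ℕ) ≠ i1 := fun h => hne (hii0 ▸ h ▸ rfl)
          rw [if_pos ⟨(by omega : 1 < k), h1⟩, if_pos hii0, if_neg hii1, add_zero]
          field_simp
        · by_cases h2 : (j : ℕ) = ((i : ℕ) + 2) % k
          · have hii1 : (i : ℕ) = i1 := by
              rw [hi1def, h2, mod_shift k i 2 (k - 2) hik (by omega)]
            have hii0 : (i : ℕ) ≠ i0 := by
              intro h
              exact h1 (by rw [← hi0j, ← h])
            rw [if_neg (fun h => h1 h.2), if_pos ⟨(by omega : 1 < k), h2⟩,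
              if_neg hii0, if_pos hii1, zero_add]
            field_simp
          · have hii0 : (i : ℕ) ≠ i0 := by
              intro h
              exact h1 (by rw [← hi0j, ← h])
            have hii1 : (i : ℕ) ≠ i1 := by
              intro h
              exact h2 (by rw [← hi1j, ← h])
            rw [if_neg (fun h => h1 h.2), if_neg (fun h => h2 h.2),
              if_neg hii0, if_neg hii1, mul_zero, add_zero]
      · have hpi : p i = 0 := hp0 i (by omega)
        rw [hpi, zero_mul, if_neg (by omega), if_neg (by omega), add_zero]
    rw [colPay]
    calc ∑ i, p i * eRPS k p q i j
        = ∑ i : Fin m, ((if (i : ℕ) = i0 then -(eRPSc k p q / q j) else 0) +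
          (if (i : ℕ) = i1 then eRPSc k p q / q j else 0)) := Finset.sum_congr rfl
          (fun i _ => key i)
      _ = (if i0 < m then -(eRPSc k p q / q j) else 0) +
          (if i1 < m then eRPSc k p q / q j else 0) := by
          rw [Finset.sum_add_distrib, sum_fin_ite, sum_fin_ite]
      _ = 0 := by
          by_cases h0 : i0 < m
          · by_cases h1 : i1 < m
            · rw [if_pos h0, if_pos h1]; ring
            · rw [hc0 i1 hi1k (by omega)]; simp
          · rw [hc0 i0 hi0k (by omega)]; simp
  have part2 : ∀ j : Fin n, k ≤ (j : ℕ) → colPay (eRPS k p q) p j = 1 := by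
    intro j hj
    rw [colPay]
    have key : ∀ i : Fin m, p i * eRPS k p q i j = p i := by
      intro i
      simp only [eRPS, Matrix.of_apply]
      by_cases hik : (i : ℕ) < k
      · rw [if_neg (by omega), if_pos hik, mul_one]
      · have hpi : p i = 0 := hp0 i (by omega)
        rw [hpi, zero_mul]
    rw [Finset.sum_congr rfl (fun i _ => key i)]
    exact hp.2
  refine ⟨part1, part2, ?_⟩
  rw [pay, Finset.sum_comm]
  apply Finset.sum_eq_zero
  intro j _
  by_cases hj : (j : ℕ) < k
  · have h0 := part1 j hj
    rw [colPay] at h0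
    calc ∑ i, p i * eRPS k p q i j * q j
        = (∑ i, p i * eRPS k p q i j) * q j := by rw [Finset.sum_mul]
      _ = 0 := by rw [h0, zero_mul]
  · apply Finset.sum_eq_zero
    intro i _
    rw [hq0 j (by omega), mul_zero]
end

section
/- Suppose the (|I|+1)×(|I|+1) matrix [[Q_{IJ}, −1]; [1ᵀ, 0]] is invertible and Q'_{IJ} = α Q_{IJ} + β·J_{IJ} where α ≠ 0, β ∈ ℝ, and J_{IJ} is the all-ones matrix. Then [[Q'_{IJ}, −1]; [1ᵀ, 0]] is also invertible. -/
open Finset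

/-- The bordered matrix `[[Q_IJ, -1]; [1ᵀ, 0]]`. -/
noncomputable def blockOf {κ : Type*} (M : Matrix κ κ ℝ) :
    Matrix (κ ⊕ Unit) (κ ⊕ Unit) ℝ :=
  Matrix.of fun a b =>
    match a, b with
    | Sum.inl i, Sum.inl j => M i j
    | Sum.inl _, Sum.inr _ => -1
    | Sum.inr _, Sum.inl _ => 1
    | Sum.inr _, Sum.inr _ => 0

/-- Invertibility of the bordered matrix is preserved under `Q ↦ α Q + β J` with
`α ≠ 0`, where `J` is the all-ones matrix. -/
theorem stmt15 {κ : Type*} [Fintype κ] [DecidableEq κ]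
    (Q Q' : Matrix κ κ ℝ) (α β : ℝ) (hα : α ≠ 0)
    (hQ' : Q' = α • Q + β • (Matrix.of fun _ _ => (1 : ℝ)))
    (hinv : IsUnit (blockOf Q).det) :
    IsUnit (blockOf Q').det := by
  rw [isUnit_iff_ne_zero] at hinv ⊢
  intro h
  obtain ⟨v, hv0, hv⟩ := (Matrix.exists_mulVec_eq_zero_iff).2 h
  apply hinv
  rw [← Matrix.exists_mulVec_eq_zero_iff]
  have hsum : ∑ j, v (Sum.inl j) = 0 := by
    have := congrFun hv (Sum.inr ())
    simpa [Matrix.mulVec, dotProduct, blockOf, Fintype.sum_sum_type] using this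
  refine ⟨Sum.elim (fun j => α * v (Sum.inl j)) (fun _ => v (Sum.inr ())), ?_, ?_⟩
  · intro hw
    apply hv0
    funext a
    cases a with
    | inl j =>
      have := congrFun hw (Sum.inl j)
      simp at this
      rcases this with h1 | h1
      · exact absurd h1 hα
      · exact h1
    | inr u =>
      have := congrFun hw (Sum.inr ())
      simpa using this
  · funext a
    cases a with
    | inl i =>
      have hrow := congrFun hv (Sum.inl i)
      simp only [Matrix.mulVec, dotProduct, blockOf, Fintype.sum_sum_type,
        Matrix.of_apply, hQ', Matrix.add_apply, Matrix.smul_apply, smul_eq_mul,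
        Pi.zero_apply, Finset.univ_unique, Finset.sum_singleton] at hrow ⊢
      have : ∑ j, (α * Q i j + β * 1) * v (Sum.inl j)
          = α * ∑ j, Q i j * v (Sum.inl j) + β * ∑ j, v (Sum.inl j) := by
        rw [Finset.mul_sum, Finset.mul_sum, ← Finset.sum_add_distrib]
        congr 1; ext j; ring
      rw [this, hsum, mul_zero, add_zero] at hrow
      have : ∑ j, Q i j * (α * v (Sum.inl j)) = α * ∑ j, Q i j * v (Sum.inl j) := by
        rw [Finset.mul_sum]; congr 1; ext j; ring
      simp only [Sum.elim_inl, Sum.elim_inr]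
      rw [this]
      linarith
    | inr u =>
      have := congrFun hv (Sum.inr ())
      simp only [Matrix.mulVec, dotProduct, blockOf, Fintype.sum_sum_type,
        Matrix.of_apply, Pi.zero_apply, Finset.univ_unique, Finset.sum_singleton] at this ⊢
      simp only [Sum.elim_inl, Sum.elim_inr, one_mul, zero_mul, add_zero] at *
      rw [← Finset.mul_sum, hsum, mul_zero]
end

section
/- In the k=1 Extended Rock-Paper-Scissors game—R_{00} = 0, R_{0j} = 1 for j ≥ 1, R_{i0} = −1 for i ≥ 1, R_{ij} = 0 for i,j ≥ 1—the pure strategy profile (e_0, e_0) is the unique Nash equilibrium, with value 0. -/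
open Finset

lemma pay_eq17 {m n : ℕ}
    (R : Matrix (Fin (m + 1)) (Fin (n + 1)) ℝ)
    (hR : R = Matrix.of fun i j =>
      if i = 0 ∧ j = 0 then (0 : ℝ)
      else if i = 0 then 1
      else if j = 0 then -1
      else 0)
    (p : Fin (m+1) → ℝ) (q : Fin (n+1) → ℝ)
    (hp : isSimplex p) (hq : isSimplex q) :
    pay R p q = p 0 - q 0 := by
  have hp0 : ∑ i : Fin m, p i.succ = 1 - p 0 := by
    have := hp.2; rw [Fin.sum_univ_succ] at this; linarith
  have hq0 : ∑ j : Fin n, q j.succ = 1 - q 0 := by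
    have := hq.2; rw [Fin.sum_univ_succ] at this; linarith
  subst hR
  unfold pay
  rw [Fin.sum_univ_succ]
  simp only [Matrix.of_apply, Fin.sum_univ_succ, Fin.succ_ne_zero, if_false,
    and_false, false_and, and_true, if_true, eq_self_iff_true, mul_zero, zero_mul,
    mul_one, mul_neg_one, Finset.sum_const_zero, add_zero]
  rw [← Finset.mul_sum, hq0, ← Finset.sum_mul, Finset.sum_neg_distrib, hp0]
  ring

lemma simplex_single17 {n : ℕ} : isSimplex (Pi.single 0 1 : Fin (n+1) → ℝ) := by
  constructor
  · intro i
    rcases eq_or_ne i 0 with h | h <;> simp [h, Pi.single_apply]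
  · simp [Finset.sum_pi_single']

lemma simplex_le_one17 {n : ℕ} (p : Fin (n+1) → ℝ) (hp : isSimplex p) : p 0 ≤ 1 := by
  have := Finset.single_le_sum (f := p) (fun i _ => hp.1 i) (Finset.mem_univ 0)
  rw [hp.2] at this; exact this

lemma simplex_eq_single17 {n : ℕ} (p : Fin (n+1) → ℝ) (hp : isSimplex p)
    (h0 : p 0 = 1) : p = Pi.single 0 1 := by
  have hz : ∑ i ∈ Finset.univ.erase 0, p i = 0 := by
    have := Finset.add_sum_erase Finset.univ p (Finset.mem_univ (0 : Fin (n+1)))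
    rw [hp.2, h0] at this; linarith
  have hall := (Finset.sum_eq_zero_iff_of_nonneg (fun i _ => hp.1 i)).mp hz
  funext i
  rcases eq_or_ne i 0 with h | h
  · subst h; rw [h0, Pi.single_eq_same]
  · rw [Pi.single_apply, if_neg h]
    exact hall i (Finset.mem_erase.mpr ⟨h, Finset.mem_univ i⟩)

/-- The `k = 1` extended Rock-Paper-Scissors game has `(e₀, e₀)` as its unique Nash
equilibrium, with value `0`. -/
theorem stmt17 (m n : ℕ)
    (R : Matrix (Fin (m + 1)) (Fin (n + 1)) ℝ)
    (hR : R = Matrix.of fun i j =>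
      if i = 0 ∧ j = 0 then (0 : ℝ)
      else if i = 0 then 1
      else if j = 0 then -1
      else 0)
    (e0m : Fin (m + 1) → ℝ) (he0m : e0m = Pi.single 0 1)
    (e0n : Fin (n + 1) → ℝ) (he0n : e0n = Pi.single 0 1) :
    isNash R e0m e0n ∧ (∀ p' q', isNash R p' q' → p' = e0m ∧ q' = e0n) ∧
      pay R e0m e0n = 0 := by
  have hem : isSimplex e0m := he0m ▸ simplex_single17
  have hen : isSimplex e0n := he0n ▸ simplex_single17
  have hm0 : e0m 0 = 1 := by rw [he0m, Pi.single_eq_same]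
  have hn0 : e0n 0 = 1 := by rw [he0n, Pi.single_eq_same]
  have hval : pay R e0m e0n = 0 := by
    rw [pay_eq17 R hR _ _ hem hen, hm0, hn0]; ring
  refine ⟨⟨hem, hen, ?_, ?_⟩, ?_, hval⟩
  · intro p' hp'
    rw [pay_eq17 R hR _ _ hp' hen, hval]
    have := simplex_le_one17 p' hp'
    linarith [hn0]
  · intro q' hq'
    rw [pay_eq17 R hR _ _ hem hq', hval]
    have := simplex_le_one17 q' hq'
    linarith [hm0]
  · rintro p' q' ⟨hp', hq', h1, h2⟩
    have hle1 := simplex_le_one17 p' hp'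
    have hle2 := simplex_le_one17 q' hq'
    have hb1 := h1 e0m hem
    have hb2 := h2 e0n hen
    rw [pay_eq17 R hR _ _ hem hq', pay_eq17 R hR _ _ hp' hq'] at hb1
    rw [pay_eq17 R hR _ _ hp' hen, pay_eq17 R hR _ _ hp' hq'] at hb2
    have hp1 : p' 0 = 1 := by linarith [hm0]
    have hq1 : q' 0 = 1 := by linarith [hn0]
    exact ⟨he0m ▸ simplex_eq_single17 p' hp' hp1, he0n ▸ simplex_eq_single17 q' hq' hq1⟩
end

section
/- Consider a finite-horizon two-player zero-sum Markov game with horizon H where every stage-game Q-matrix Q_h(s) (defined via the Bellman recursion from rewards R and transitions P) has a unique Nash equilibrium (p_h(s), q_h(s)) with value v_h(s). If the rewards are defined as R_h(s) = δ·R^{eRPS(p_h(s), q_h(s))} + v*/H for all h, s (with v* ∈ ℝ, δ > 0), then the stage value satisfies v_h(s) = ((H−h+1)/H)·v* for every h ∈ [H], s ∈ S, and the overall game value Σ_s P₀(s) v₁(s) equals v*. -/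
open Finset

lemma pay_affine {m n : ℕ} (M : Matrix (Fin m) (Fin n) ℝ) (a C : ℝ)
    (p : Fin m → ℝ) (q : Fin n → ℝ) (hp : isSimplex p) (hq : isSimplex q) :
    pay (Matrix.of fun i j => a * M i j + C) p q = a * pay M p q + C := by
  unfold pay
  calc ∑ i, ∑ j, p i * (Matrix.of fun i j => a * M i j + C) i j * q j
      = ∑ i, ∑ j, (a * (p i * M i j * q j) + C * (p i * q j)) := by
        refine Finset.sum_congr rfl fun i _ => Finset.sum_congr rfl fun j _ => ?_
        simp only [Matrix.of_apply]; ring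
    _ = a * (∑ i, ∑ j, p i * M i j * q j) + C * ∑ i, (p i * ∑ j, q j) := by
        simp [Finset.sum_add_distrib, Finset.mul_sum]
    _ = a * (∑ i, ∑ j, p i * M i j * q j) + C := by
        simp [hq.2, hp.2]

lemma pay_eRPS_zero {m n k : ℕ} (p : Fin m → ℝ) (q : Fin n → ℝ)
    (hp0 : ∀ i, 0 ≤ p i) (hq0 : ∀ j, 0 ≤ q j)
    (hps : ∀ i : Fin m, 0 < p i ↔ (i : ℕ) < k)
    (hqs : ∀ j : Fin n, 0 < q j ↔ (j : ℕ) < k) :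
    pay (eRPS k p q) p q = 0 := by
  have hpz : ∀ i : Fin m, ¬ ((i : ℕ) < k) → p i = 0 := by
    intro i h
    rcases (hp0 i).eq_or_lt with h' | h'
    · exact h'.symm
    · exact absurd ((hps i).1 h') h
  have hqz : ∀ j : Fin n, ¬ ((j : ℕ) < k) → q j = 0 := by
    intro j h
    rcases (hq0 j).eq_or_lt with h' | h'
    · exact h'.symm
    · exact absurd ((hqs j).1 h') h
  have hpe : ∀ t, 0 ≤ pext p t := by
    intro t; unfold pext; split
    · exact hp0 _
    · exact le_rfl
  have hqe : ∀ t, 0 ≤ pext q t := by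
    intro t; unfold pext; split
    · exact hq0 _
    · exact le_rfl
  unfold pay
  refine Finset.sum_eq_zero fun i _ => ?_
  by_cases hik : (i : ℕ) < k
  · have hkpos : 0 < k := by omega
    have hcge : 0 ≤ eRPSc k p q := by
      have : Nonempty (Fin k) := ⟨⟨(i : ℕ), hik⟩⟩
      exact le_ciInf fun t => le_min (mul_nonneg (hpe _) (hqe _)) (mul_nonneg (hpe _) (hqe _))
    by_cases hk1 : 1 < k
    · by_cases hmn : k ≤ m ∧ k ≤ n
      · -- canonical case : the ±c entries cancel
        have hj1n : ((i : ℕ) + 1) % k < n := (Nat.mod_lt _ hkpos).trans_le hmn.2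
        have hj2n : ((i : ℕ) + 2) % k < n := (Nat.mod_lt _ hkpos).trans_le hmn.2
        set j₁ : Fin n := ⟨((i : ℕ) + 1) % k, hj1n⟩ with hj₁
        set j₂ : Fin n := ⟨((i : ℕ) + 2) % k, hj2n⟩ with hj₂
        have hnenat : ((i : ℕ) + 1) % k ≠ ((i : ℕ) + 2) % k := by
          intro h
          have h1 : 1 % k = 2 % k :=
            Nat.ModEq.add_left_cancel' (i : ℕ) (h : ((i:ℕ)+1) ≡ ((i:ℕ)+2) [MOD k])
          by_cases hk2 : k = 2
          · subst hk2; norm_num at h1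
          · have hk3 : 3 ≤ k := by omega
            rw [Nat.mod_eq_of_lt (by omega), Nat.mod_eq_of_lt (by omega)] at h1
            omega
        have hjne : j₁ ≠ j₂ := by
          intro h; exact hnenat (congrArg Fin.val h)
        have hq1 : 0 < q j₁ := (hqs j₁).2 (Nat.mod_lt _ hkpos)
        have hq2 : 0 < q j₂ := (hqs j₂).2 (Nat.mod_lt _ hkpos)
        have hpi : 0 < p i := (hps i).2 hik
        rw [Finset.sum_eq_add j₁ j₂ hjne ?_ (by simp) (by simp)]
        · have e1 : p i * eRPS k p q i j₁ * q j₁ = -(eRPSc k p q) := by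
            have : eRPS k p q i j₁ = -(eRPSc k p q) / (p i * q j₁) := by
              unfold eRPS
              simp only [Matrix.of_apply, hj₁]
              rw [if_pos ⟨hik, Nat.mod_lt _ hkpos⟩, if_pos ⟨hk1, by simp⟩]
            rw [this]
            field_simp [hpi.ne', hq1.ne']
          have e2 : p i * eRPS k p q i j₂ * q j₂ = eRPSc k p q := by
            have : eRPS k p q i j₂ = eRPSc k p q / (p i * q j₂) := by
              unfold eRPS
              simp only [Matrix.of_apply, hj₂]
              rw [if_pos ⟨hik, Nat.mod_lt _ hkpos⟩, if_neg, if_pos ⟨hk1, by simp⟩]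
              rintro ⟨-, h⟩
              exact hnenat h.symm
            rw [this]
            field_simp [hpi.ne', hq2.ne']
          rw [e1, e2]; ring
        · rintro j - ⟨hja, hjb⟩
          by_cases hjk : (j : ℕ) < k
          · have : eRPS k p q i j = 0 := by
              unfold eRPS
              simp only [Matrix.of_apply]
              rw [if_pos ⟨hik, hjk⟩, if_neg, if_neg]
              · rintro ⟨-, h⟩
                exact hjb (Fin.ext h)
              · rintro ⟨-, h⟩
                exact hja (Fin.ext h)
            rw [this]; ring
          · rw [hqz j hjk]; ring
      · -- degenerate case : eRPSc = 0, all block entries vanish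
        have hcle : eRPSc k p q ≤ 0 := by
          by_cases hkm : k ≤ m
          · have hnk : n < k := by omega
            have h2 : (2 : ℕ) ≤ k := hk1
            have hb : BddBelow (Set.range fun t : Fin k =>
                min (pext p t * pext q (((t : ℕ) + 1) % k))
                  (pext p t * pext q (((t : ℕ) + 2) % k))) :=
              (Set.finite_range _).bddBelow
            have := ciInf_le hb (⟨k - 2, by omega⟩ : Fin k)
            refine this.trans ?_
            have hmod : (k - 2 + 1) % k = k - 1 := by
              rw [show k - 2 + 1 = k - 1 by omega, Nat.mod_eq_of_lt (by omega)]
            have hz : pext q ((k - 2 + 1) % k) = 0 := by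
              rw [hmod]; unfold pext; rw [dif_neg (by omega)]
            refine (min_le_left _ _).trans ?_
            simp [hz]
          · have hmk : m < k := by omega
            have hb : BddBelow (Set.range fun t : Fin k =>
                min (pext p t * pext q (((t : ℕ) + 1) % k))
                  (pext p t * pext q (((t : ℕ) + 2) % k))) :=
              (Set.finite_range _).bddBelow
            have := ciInf_le hb (⟨m, hmk⟩ : Fin k)
            refine this.trans ?_
            have hz : pext p (m : ℕ) = 0 := by
              unfold pext; rw [dif_neg (by omega)]
            refine (min_le_left _ _).trans ?_
            simp [hz]
        have hc0 : eRPSc k p q = 0 := le_antisymm hcle hcge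
        refine Finset.sum_eq_zero fun j _ => ?_
        by_cases hjk : (j : ℕ) < k
        · have : eRPS k p q i j = 0 := by
            unfold eRPS
            simp only [Matrix.of_apply, hc0]
            rw [if_pos ⟨hik, hjk⟩]
            split
            · simp
            · split <;> simp
          rw [this]; ring
        · rw [hqz j hjk]; ring
    · -- k = 1 : all block entries are 0
      refine Finset.sum_eq_zero fun j _ => ?_
      by_cases hjk : (j : ℕ) < k
      · have : eRPS k p q i j = 0 := by
          unfold eRPS
          simp only [Matrix.of_apply]
          rw [if_pos ⟨hik, hjk⟩, if_neg (fun h => hk1 h.1), if_neg (fun h => hk1 h.1)]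
        rw [this]; ring
      · rw [hqz j hjk]; ring
  · refine Finset.sum_eq_zero fun j _ => ?_
    rw [hpz i hik]; ring

/-- In a finite-horizon zero-sum Markov game whose stage rewards are
`δ·R^{eRPS(p_h(s), q_h(s))} + v*/H`, the stage values are `v_h(s) = ((H-h)/H)·v*`
(0-indexed periods) and the overall game value is `v*`. -/
theorem stmt18 {S : Type*} [Fintype S] {m n H : ℕ} (hH : 1 ≤ H)
    (P0 : S → ℝ) (hP0 : (∀ s, 0 ≤ P0 s) ∧ ∑ s, P0 s = 1)
    (P : ℕ → S → S → Matrix (Fin m) (Fin n) ℝ)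
    (hP : ∀ h < H, ∀ s, ∀ (i : Fin m) (j : Fin n),
      (∀ s', 0 ≤ P h s s' i j) ∧ ∑ s', P h s s' i j = 1)
    (R Q : ℕ → S → Matrix (Fin m) (Fin n) ℝ)
    (v : ℕ → S → ℝ)
    (p : ℕ → S → Fin m → ℝ) (q : ℕ → S → Fin n → ℝ)
    (k : ℕ → S → ℕ)
    (vstar δ : ℝ) (hδ : 0 < δ)
    (hsimp : ∀ h < H, ∀ s, isSimplex (p h s) ∧ isSimplex (q h s))
    (hsupp : ∀ h < H, ∀ s, (∀ i : Fin m, 0 < p h s i ↔ (i : ℕ) < k h s) ∧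
      (∀ j : Fin n, 0 < q h s j ↔ (j : ℕ) < k h s))
    (hvH : ∀ s, v H s = 0)
    (hQ : ∀ h < H, ∀ s, Q h s =
      Matrix.of fun i j => R h s i j + ∑ s', P h s s' i j * v (h + 1) s')
    (hNash : ∀ h < H, ∀ s, isNash (Q h s) (p h s) (q h s) ∧
      ∀ p' q', isNash (Q h s) p' q' → p' = p h s ∧ q' = q h s)
    (hval : ∀ h < H, ∀ s, v h s = pay (Q h s) (p h s) (q h s))
    (hR : ∀ h < H, ∀ s, R h s =
      Matrix.of fun i j => δ * eRPS (k h s) (p h s) (q h s) i j + vstar / H) :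
    (∀ h < H, ∀ s, v h s = (((H : ℝ) - h) / H) * vstar) ∧
      ∑ s, P0 s * v 0 s = vstar := by
  have hHne : (H : ℝ) ≠ 0 := by
    exact_mod_cast Nat.one_le_iff_ne_zero.mp hH
  have key : ∀ d ≤ H, ∀ s, v (H - d) s = ((d : ℝ) / H) * vstar := by
    intro d
    induction d with
    | zero => intro _ s; simp [hvH]
    | succ d ih =>
      intro hd s
      have hdH : d ≤ H := by omega
      have hh : H - (d + 1) < H := by omega
      set h := H - (d + 1) with hdef
      have hh1 : h + 1 = H - d := by omega
      obtain ⟨hp, hq⟩ := hsimp h hh s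
      obtain ⟨hps, hqs⟩ := hsupp h hh s
      have hQeq : Q h s = Matrix.of (fun i j =>
          δ * eRPS (k h s) (p h s) (q h s) i j + (((d : ℝ) + 1) / H * vstar)) := by
        rw [hQ h hh s]
        ext i j
        simp only [Matrix.of_apply]
        rw [hR h hh s]
        simp only [Matrix.of_apply]
        have hsum : ∑ s', P h s s' i j * v (h + 1) s' = ((d : ℝ) / H) * vstar := by
          calc ∑ s', P h s s' i j * v (h + 1) s'
              = ∑ s', P h s s' i j * (((d : ℝ) / H) * vstar) := by
                refine Finset.sum_congr rfl fun s' _ => ?_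
                rw [hh1, ih hdH s']
            _ = (∑ s', P h s s' i j) * (((d : ℝ) / H) * vstar) := by
                rw [Finset.sum_mul]
            _ = ((d : ℝ) / H) * vstar := by
                rw [(hP h hh s i j).2, one_mul]
        rw [hsum]
        field_simp
        ring
      rw [hval h hh s, hQeq, pay_affine _ _ _ _ _ hp hq,
        pay_eRPS_zero (p h s) (q h s) hp.1 hq.1 hps hqs]
      push_cast
      ring
  constructor
  · intro h hhH s
    have := key (H - h) (by omega) s
    rw [show H - (H - h) = h by omega] at this
    rw [this, Nat.cast_sub hhH.le]
  · have h0 : ∀ s, v 0 s = vstar := by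
      intro s
      have := key H le_rfl s
      rw [Nat.sub_self] at this
      rw [this, div_self hHne, one_mul]
    calc ∑ s, P0 s * v 0 s = ∑ s, P0 s * vstar := by
          refine Finset.sum_congr rfl fun s _ => by rw [h0 s]
      _ = (∑ s, P0 s) * vstar := by rw [Finset.sum_mul]
      _ = vstar := by rw [hP0.2, one_mul]
end
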